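/- Let 𝒮 = {S^𝐢 : 𝐢 ∈ [d₁]×···×[dₙ]} be a generalized nD-ordered family. For any element u ∈ ∪𝒮, the index set 𝐈^u = {𝐢 : u ∈ S^𝐢} is a product: 𝐈^u = 𝐈^u_1 × ··· × 𝐈^u_n, where 𝐈^u_j = {𝐢_j : u ∈ S^𝐢}. -/
import Mathlib


/-- `v` lies in the grid `[d₁] × ⋯ × [dₙ]`. -/
def InGrid (n : ℕ) (dv : Fin n → ℕ) (v : Fin n → ℕ) : Prop :=
  ∀ j, 1 ≤ v j ∧ v j ≤ dv j

/-- The ℓ¹ distance between two grid indices. -/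
def l1dist (n : ℕ) (a b : Fin n → ℕ) : ℕ :=
  ∑ j : Fin n, ((a j : ℤ) - (b j : ℤ)).natAbs

/-- For a generalized nD-ordered family, the index set `𝐈^u = {𝐢 : u ∈ S 𝐢}` is a
product of its coordinate projections: a grid index `𝐢` satisfies `u ∈ S 𝐢` iff for
each coordinate `j` there is a grid index `𝐣` with `u ∈ S 𝐣` and `𝐣_j = 𝐢_j`. -/
theorem index_set_is_product {α : Type*} (n : ℕ) (hn : 0 < n) (dv : Fin n → ℕ)
    (S : (Fin n → ℕ) → Set α)
    (h1 : ∀ i j, InGrid n dv i → InGrid n dv j →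
      (∃ k, 2 ≤ ((i k : ℤ) - (j k : ℤ)).natAbs) → S i ∩ S j = ∅)
    (h2 : ∀ i j v, InGrid n dv i → InGrid n dv j → InGrid n dv v →
      l1dist n i v + l1dist n v j = l1dist n i j → S i ∩ S j ⊆ S v)
    (u : α) (i : Fin n → ℕ) (hi : InGrid n dv i) :
    u ∈ S i ↔ ∀ j : Fin n, ∃ i2, InGrid n dv i2 ∧ u ∈ S i2 ∧ i2 j = i j := by
  constructor
  · intro hu j
    exact ⟨i, hi, hu, rfl⟩
  · intro h
    have key : ∀ k : ℕ, k ≤ n →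
        ∃ w, InGrid n dv w ∧ u ∈ S w ∧ ∀ j : Fin n, (j : ℕ) < k → w j = i j := by
      intro k
      induction k with
      | zero =>
        intro _
        obtain ⟨w, hw, hwu, _⟩ := h ⟨0, hn⟩
        exact ⟨w, hw, hwu, fun j hj => absurd hj (Nat.not_lt_zero _)⟩
      | succ k ih =>
        intro hk
        obtain ⟨w, hw, hwu, hwi⟩ := ih (Nat.le_of_succ_le hk)
        have hkn : k < n := hk
        obtain ⟨w2, hw2, hw2u, hw2k⟩ := h ⟨k, hkn⟩
        set v : Fin n → ℕ := fun j => if j = ⟨k, hkn⟩ then w2 j else w j with hv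
        have hvg : InGrid n dv v := by
          intro j
          by_cases hj : j = ⟨k, hkn⟩
          · simp only [hv, hj, if_pos rfl]
            exact hw2 _
          · simp only [hv, if_neg hj]
            exact hw j
        have hl1 : l1dist n w v + l1dist n v w2 = l1dist n w w2 := by
          unfold l1dist
          rw [← Finset.sum_add_distrib]
          apply Finset.sum_congr rfl
          intro j _
          by_cases hj : j = ⟨k, hkn⟩ <;> simp [hv, hj]
        have hvu : u ∈ S v := h2 w w2 v hw hw2 hvg hl1 ⟨hwu, hw2u⟩
        refine ⟨v, hvg, hvu, ?_⟩
        intro j hj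
        by_cases hjk : j = ⟨k, hkn⟩
        · simp only [hv, hjk, if_pos rfl]
          exact hw2k
        · have hjlt : (j : ℕ) < k := by
            rcases Nat.lt_succ_iff_lt_or_eq.mp hj with h' | h'
            · exact h'
            · exact absurd (Fin.ext h') hjk
          simp only [hv, if_neg hjk]
          exact hwi j hjlt
    obtain ⟨w, hwg, hwu, hwi⟩ := key n le_rfl
    have : w = i := funext fun j => hwi j j.isLt
    rwa [this] at hwu
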